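/- arXiv:2310.16638 — 6 statements merged into one kernel-verified Lean document; each statement's English description precedes it below -/
import Mathlib

section
/- Double robustness, case (i) (correct regression function, arbitrary weight): for every nonnegative bounded measurable r† : 𝒳 → ℝ and every bounded measurable g : 𝒳 → ℝ, the population DR risk with f† = f₀ satisfies R̈(g; f₀, r†) = ∫_𝒳 (f₀(x) − g(x))² dq(x) + ∫_{𝒳×ℝ} (y − f₀(x))² r†(x) dP(x,y), where the second term does not depend on g. -/
open MeasureTheory ProbabilityTheory

/-- Double robustness, case (i) (correct regression function, arbitrary weight):
for every nonnegative bounded measurable `r†` and bounded measurable `g`, the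
population DR risk with `f† = f₀` equals
`∫ (f₀ − g)² dq + ∫ (y − f₀ x)² r†(x) dP`, where the second term does not depend
on `g`. -/
theorem dr_risk_correct_regression_function
    {𝒳 : Type*} [MeasurableSpace 𝒳]
    (p : Measure 𝒳) [IsProbabilityMeasure p]
    (r₀ : 𝒳 → ℝ) (hr₀_meas : Measurable r₀) (hr₀_nonneg : ∀ x, 0 ≤ r₀ x)
    (Cr : ℝ) (hr₀_bdd : ∀ x, r₀ x ≤ Cr)
    (hr₀_int : ∫ x, r₀ x ∂p = 1)
    (κ : Kernel 𝒳 ℝ) [IsMarkovKernel κ]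
    (C : ℝ) (hC : 0 < C) (hκ_supp : ∀ x, ∀ᵐ y ∂(κ x), y ∈ Set.Icc (-C) C)
    (f₀ : 𝒳 → ℝ) (hf₀ : ∀ x, f₀ x = ∫ y, y ∂(κ x))
    (rdag : 𝒳 → ℝ) (hrdag_meas : Measurable rdag) (hrdag_nonneg : ∀ x, 0 ≤ rdag x)
    (Crdag : ℝ) (hrdag_bdd : ∀ x, rdag x ≤ Crdag)
    (g : 𝒳 → ℝ) (hg_meas : Measurable g)
    (Cg : ℝ) (hg_bdd : ∀ x, |g x| ≤ Cg) :
    (∫ z : 𝒳 × ℝ, ((z.2 - g z.1) ^ 2 - (f₀ z.1 - g z.1) ^ 2) * rdag z.1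
          ∂(p.compProd κ)
        + ∫ x, (f₀ x - g x) ^ 2 ∂(p.withDensity (fun x => ENNReal.ofReal (r₀ x))))
      = (∫ x, (f₀ x - g x) ^ 2 ∂(p.withDensity (fun x => ENNReal.ofReal (r₀ x))))
          + ∫ z : 𝒳 × ℝ, (z.2 - f₀ z.1) ^ 2 * rdag z.1 ∂(p.compProd κ) := by
  have hf₀_sm : StronglyMeasurable f₀ := by
    have h : StronglyMeasurable fun x => ∫ y, (fun _ : 𝒳 => fun y : ℝ => y) x y ∂κ x :=
      MeasureTheory.StronglyMeasurable.integral_kernel_prod_right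
        (measurable_snd.stronglyMeasurable)
    have : f₀ = fun x => ∫ y, y ∂κ x := funext hf₀
    rw [this]; exact h
  have hf₀_meas : Measurable f₀ := hf₀_sm.measurable
  have hf₀_bdd : ∀ x, |f₀ x| ≤ C := by
    intro x
    rw [hf₀ x]
    have := norm_integral_le_of_norm_le_const (μ := κ x) (C := C) (f := fun y : ℝ => y)
      (by filter_upwards [hκ_supp x] with y hy using abs_le.2 ⟨hy.1, hy.2⟩)
    simpa using this
  -- ae bound on y over compProd
  have hy_ae : ∀ᵐ z : 𝒳 × ℝ ∂(p.compProd κ), |z.2| ≤ C := by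
    rw [Measure.ae_compProd_iff (by
      exact measurableSet_le (measurable_snd.abs) measurable_const)]
    filter_upwards with x
    filter_upwards [hκ_supp x] with y hy using abs_le.2 ⟨hy.1, hy.2⟩
  -- integrability of the two compProd integrands
  have hsm1 : AEStronglyMeasurable
      (fun z : 𝒳 × ℝ => ((z.2 - g z.1) ^ 2 - (f₀ z.1 - g z.1) ^ 2) * rdag z.1)
      (p.compProd κ) := by
    apply Measurable.aestronglyMeasurable
    exact (((measurable_snd.sub (hg_meas.comp measurable_fst)).pow_const 2).sub
      (((hf₀_meas.comp measurable_fst).sub (hg_meas.comp measurable_fst)).pow_const 2)).mul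
      (hrdag_meas.comp measurable_fst)
  have hsm2 : AEStronglyMeasurable
      (fun z : 𝒳 × ℝ => (z.2 - f₀ z.1) ^ 2 * rdag z.1) (p.compProd κ) := by
    apply Measurable.aestronglyMeasurable
    exact ((measurable_snd.sub (hf₀_meas.comp measurable_fst)).pow_const 2).mul
      (hrdag_meas.comp measurable_fst)
  have hbound : ∀ (x : 𝒳) (y : ℝ), |y| ≤ C →
      |((y - g x) ^ 2 - (f₀ x - g x) ^ 2) * rdag x| ≤ (2 * C + 2 * Cg) ^ 2 * Crdag ∧
      |(y - f₀ x) ^ 2 * rdag x| ≤ (2 * C + 2 * Cg) ^ 2 * Crdag := by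
    intro x y hy
    have hCg : 0 ≤ Cg := le_trans (abs_nonneg _) (hg_bdd x)
    have hg' := abs_le.1 (hg_bdd x)
    have hf' := abs_le.1 (hf₀_bdd x)
    have hy' := abs_le.1 hy
    have hr1 : rdag x ≤ Crdag := hrdag_bdd x
    have hr0 : 0 ≤ rdag x := hrdag_nonneg x
    constructor
    · rw [abs_mul, abs_of_nonneg hr0]
      have h1 : |(y - g x) ^ 2 - (f₀ x - g x) ^ 2| ≤ (2 * C + 2 * Cg) ^ 2 := by
        have e1 : (y - g x) ^ 2 ≤ (C + Cg) ^ 2 := by nlinarith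
        have e2 : (f₀ x - g x) ^ 2 ≤ (C + Cg) ^ 2 := by nlinarith
        have e3 : (0:ℝ) ≤ (y - g x) ^ 2 := sq_nonneg _
        have e4 : (0:ℝ) ≤ (f₀ x - g x) ^ 2 := sq_nonneg _
        rw [abs_sub_le_iff]; constructor <;> nlinarith
      exact mul_le_mul h1 hr1 hr0 (by positivity)
    · rw [abs_mul, abs_of_nonneg hr0]
      have h1 : |(y - f₀ x) ^ 2| ≤ (2 * C + 2 * Cg) ^ 2 := by
        rw [abs_of_nonneg (sq_nonneg _)]
        nlinarith
      exact mul_le_mul h1 hr1 hr0 (by positivity)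
  have hInt1 : Integrable
      (fun z : 𝒳 × ℝ => ((z.2 - g z.1) ^ 2 - (f₀ z.1 - g z.1) ^ 2) * rdag z.1)
      (p.compProd κ) := by
    refine Integrable.mono' (integrable_const ((2 * C + 2 * Cg) ^ 2 * Crdag)) hsm1 ?_
    filter_upwards [hy_ae] with z hz
    rw [Real.norm_eq_abs]; exact (hbound z.1 z.2 hz).1
  have hInt2 : Integrable
      (fun z : 𝒳 × ℝ => (z.2 - f₀ z.1) ^ 2 * rdag z.1) (p.compProd κ) := by
    refine Integrable.mono' (integrable_const ((2 * C + 2 * Cg) ^ 2 * Crdag)) hsm2 ?_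
    filter_upwards [hy_ae] with z hz
    rw [Real.norm_eq_abs]; exact (hbound z.1 z.2 hz).2
  rw [add_comm]
  congr 1
  rw [Measure.integral_compProd hInt1, Measure.integral_compProd hInt2]
  refine integral_congr_ae (Filter.Eventually.of_forall fun x => ?_)
  -- per-x computation
  have hκx : IsProbabilityMeasure (κ x) := inferInstance
  have hy_int : Integrable (fun y : ℝ => y) (κ x) := by
    refine Integrable.mono' (integrable_const C) measurable_id.aestronglyMeasurable ?_
    filter_upwards [hκ_supp x] with y hy
    simpa [Real.norm_eq_abs] using abs_le.2 ⟨hy.1, hy.2⟩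
  have h1 : Integrable (fun y : ℝ => ((y - g x) ^ 2 - (f₀ x - g x) ^ 2) * rdag x) (κ x) := by
    refine Integrable.mono' (integrable_const ((2 * C + 2 * Cg) ^ 2 * Crdag)) ?_ ?_
    · exact (((measurable_id.sub measurable_const).pow_const 2).sub
        measurable_const).mul measurable_const |>.aestronglyMeasurable
    · filter_upwards [hκ_supp x] with y hy
      rw [Real.norm_eq_abs]; exact (hbound x y (abs_le.2 ⟨hy.1, hy.2⟩)).1
  have h2 : Integrable (fun y : ℝ => (y - f₀ x) ^ 2 * rdag x) (κ x) := by
    refine Integrable.mono' (integrable_const ((2 * C + 2 * Cg) ^ 2 * Crdag)) ?_ ?_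
    · exact ((measurable_id.sub measurable_const).pow_const 2).mul
        measurable_const |>.aestronglyMeasurable
    · filter_upwards [hκ_supp x] with y hy
      rw [Real.norm_eq_abs]; exact (hbound x y (abs_le.2 ⟨hy.1, hy.2⟩)).2
  have key : ∫ y, (((y - g x) ^ 2 - (f₀ x - g x) ^ 2) * rdag x
      - (y - f₀ x) ^ 2 * rdag x) ∂κ x = 0 := by
    have heq : (fun y : ℝ => ((y - g x) ^ 2 - (f₀ x - g x) ^ 2) * rdag x
        - (y - f₀ x) ^ 2 * rdag x)
        = fun y : ℝ => (2 * (f₀ x - g x) * rdag x) * y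
          - (2 * (f₀ x - g x) * rdag x) * f₀ x := by
      funext y; ring
    rw [heq, integral_sub (hy_int.const_mul _) (integrable_const _),
      integral_const_mul, integral_const]
    simp [← hf₀ x]
  rw [integral_sub h1 h2] at key
  linarith
end

section
/- Double robustness, case (i), minimizer equivalence: let Θ be a set, (g_β)_{β∈Θ} a family of bounded measurable functions 𝒳 → ℝ, and r† : 𝒳 → ℝ any nonnegative bounded measurable function (not necessarily equal to the true density ratio r₀). Then β* ∈ Θ minimizes β ↦ R̈(g_β; f₀, r†) over Θ if and only if β* minimizes β ↦ ∫_𝒳 (f₀(x) − g_β(x))² dq(x) over Θ. -/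
open MeasureTheory ProbabilityTheory

/-- Double robustness, case (i), minimizer equivalence: with `f† = f₀` and an
arbitrary nonnegative bounded measurable weight `r†`, `β*` minimizes
`β ↦ R̈(g β; f₀, r†)` over `Θ` iff `β*` minimizes `β ↦ ∫ (f₀ − g β)² dq` over `Θ`. -/
theorem dr_risk_minimizer_iff_test_regression_minimizer
    {𝒳 : Type*} [MeasurableSpace 𝒳]
    (p : Measure 𝒳) [IsProbabilityMeasure p]
    (r₀ : 𝒳 → ℝ) (hr₀_meas : Measurable r₀) (hr₀_nonneg : ∀ x, 0 ≤ r₀ x)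
    (Cr : ℝ) (hr₀_bdd : ∀ x, r₀ x ≤ Cr)
    (hr₀_int : ∫ x, r₀ x ∂p = 1)
    (κ : Kernel 𝒳 ℝ) [IsMarkovKernel κ]
    (C : ℝ) (hC : 0 < C) (hκ_supp : ∀ x, ∀ᵐ y ∂(κ x), y ∈ Set.Icc (-C) C)
    (f₀ : 𝒳 → ℝ) (hf₀ : ∀ x, f₀ x = ∫ y, y ∂(κ x))
    (rdag : 𝒳 → ℝ) (hrdag_meas : Measurable rdag) (hrdag_nonneg : ∀ x, 0 ≤ rdag x)
    (Crdag : ℝ) (hrdag_bdd : ∀ x, rdag x ≤ Crdag)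
    {Θ : Type*} (g : Θ → 𝒳 → ℝ) (hg_meas : ∀ β, Measurable (g β))
    (hg_bdd : ∀ β, ∃ Cg, ∀ x, |g β x| ≤ Cg)
    (βstar : Θ) :
    (∀ β : Θ,
        (∫ z : 𝒳 × ℝ, ((z.2 - g βstar z.1) ^ 2 - (f₀ z.1 - g βstar z.1) ^ 2) * rdag z.1
              ∂(p.compProd κ)
            + ∫ x, (f₀ x - g βstar x) ^ 2
              ∂(p.withDensity (fun x => ENNReal.ofReal (r₀ x))))
          ≤ (∫ z : 𝒳 × ℝ, ((z.2 - g β z.1) ^ 2 - (f₀ z.1 - g β z.1) ^ 2) * rdag z.1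
              ∂(p.compProd κ)
            + ∫ x, (f₀ x - g β x) ^ 2
              ∂(p.withDensity (fun x => ENNReal.ofReal (r₀ x)))))
      ↔ (∀ β : Θ,
        ∫ x, (f₀ x - g βstar x) ^ 2 ∂(p.withDensity (fun x => ENNReal.ofReal (r₀ x)))
          ≤ ∫ x, (f₀ x - g β x) ^ 2
            ∂(p.withDensity (fun x => ENNReal.ofReal (r₀ x)))) := by
  have hC0 : (0:ℝ) ≤ C := hC.le
  -- measurability of f₀
  have hf₀_meas : Measurable f₀ := by
    have : Measurable fun x => ∫ y, y ∂(κ x) := by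
      have := ((measurable_snd (α := 𝒳) (β := ℝ)).stronglyMeasurable).integral_kernel_prod_right'
        (κ := κ)
      exact this.measurable
    simpa [funext hf₀] using this
  -- f₀ is bounded by C
  have hf₀_bdd : ∀ x, |f₀ x| ≤ C := by
    intro x
    rw [hf₀ x]
    have h := norm_integral_le_of_norm_le_const (μ := κ x) (f := fun y => y) (C := C) ?_
    · simpa [Real.norm_eq_abs] using h
    · filter_upwards [hκ_supp x] with y hy
      exact abs_le.mpr ⟨hy.1, hy.2⟩
  -- a.e. bound on second coordinate under compProd
  have hae : ∀ᵐ z ∂(p.compProd κ), |z.2| ≤ C := by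
    refine Measure.ae_compProd_of_ae_ae ?_ ?_
    · exact measurableSet_le (measurable_snd.abs) measurable_const
    · refine Filter.Eventually.of_forall fun x => ?_
      filter_upwards [hκ_supp x] with y hy
      exact abs_le.mpr ⟨hy.1, hy.2⟩
  haveI : Nonempty 𝒳 := Measure.nonempty_of_neZero p
  have hCrdag0 : (0:ℝ) ≤ Crdag := le_trans (hrdag_nonneg Classical.ofNonempty) (hrdag_bdd _)
  -- key: the compProd term does not depend on β
  have key : ∀ β : Θ,
      ∫ z : 𝒳 × ℝ, ((z.2 - g β z.1) ^ 2 - (f₀ z.1 - g β z.1) ^ 2) * rdag z.1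
          ∂(p.compProd κ)
        = ∫ z : 𝒳 × ℝ, (z.2 ^ 2 - f₀ z.1 ^ 2) * rdag z.1 ∂(p.compProd κ) := by
    intro β
    obtain ⟨Cg, hCg⟩ := hg_bdd β
    have hCg0 : (0:ℝ) ≤ Cg := le_trans (abs_nonneg _) (hCg Classical.ofNonempty)
    set gb := g β with hgb
    -- integrability of both integrands on compProd
    have hFmeas : Measurable fun z : 𝒳 × ℝ =>
        ((z.2 - gb z.1) ^ 2 - (f₀ z.1 - gb z.1) ^ 2) * rdag z.1 := by
      exact (((measurable_snd.sub ((hg_meas β).comp measurable_fst)).pow_const 2).sub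
        (((hf₀_meas.comp measurable_fst).sub ((hg_meas β).comp measurable_fst)).pow_const 2)).mul
        (hrdag_meas.comp measurable_fst)
    have hGmeas : Measurable fun z : 𝒳 × ℝ => (z.2 ^ 2 - f₀ z.1 ^ 2) * rdag z.1 := by
      exact ((measurable_snd.pow_const 2).sub
        ((hf₀_meas.comp measurable_fst).pow_const 2)).mul (hrdag_meas.comp measurable_fst)
    have hFint : Integrable (fun z : 𝒳 × ℝ =>
        ((z.2 - gb z.1) ^ 2 - (f₀ z.1 - gb z.1) ^ 2) * rdag z.1) (p.compProd κ) := by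
      refine Integrable.mono' (integrable_const (2 * (C + Cg) ^ 2 * Crdag))
        hFmeas.aestronglyMeasurable ?_
      filter_upwards [hae] with z hz
      have h1 : |z.2 - gb z.1| ≤ C + Cg :=
        (abs_sub _ _).trans (add_le_add hz (hCg _))
      have h2 : |f₀ z.1 - gb z.1| ≤ C + Cg :=
        (abs_sub _ _).trans (add_le_add (hf₀_bdd _) (hCg _))
      rw [Real.norm_eq_abs, abs_mul, abs_of_nonneg (hrdag_nonneg _)]
      refine mul_le_mul ?_ (hrdag_bdd _) (hrdag_nonneg _) (by positivity)
      calc |(z.2 - gb z.1) ^ 2 - (f₀ z.1 - gb z.1) ^ 2|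
          ≤ |(z.2 - gb z.1) ^ 2| + |(f₀ z.1 - gb z.1) ^ 2| := abs_sub _ _
        _ ≤ (C + Cg) ^ 2 + (C + Cg) ^ 2 := by
            rw [abs_pow, abs_pow]
            exact add_le_add (pow_le_pow_left₀ (abs_nonneg _) h1 2)
              (pow_le_pow_left₀ (abs_nonneg _) h2 2)
        _ = 2 * (C + Cg) ^ 2 := by ring
    have hGint : Integrable (fun z : 𝒳 × ℝ => (z.2 ^ 2 - f₀ z.1 ^ 2) * rdag z.1)
        (p.compProd κ) := by
      refine Integrable.mono' (integrable_const (2 * C ^ 2 * Crdag))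
        hGmeas.aestronglyMeasurable ?_
      filter_upwards [hae] with z hz
      rw [Real.norm_eq_abs, abs_mul, abs_of_nonneg (hrdag_nonneg _)]
      refine mul_le_mul ?_ (hrdag_bdd _) (hrdag_nonneg _) (by positivity)
      calc |z.2 ^ 2 - f₀ z.1 ^ 2| ≤ |z.2 ^ 2| + |f₀ z.1 ^ 2| := abs_sub _ _
        _ ≤ C ^ 2 + C ^ 2 := by
            rw [abs_pow, abs_pow]
            exact add_le_add (pow_le_pow_left₀ (abs_nonneg _) hz 2)
              (pow_le_pow_left₀ (abs_nonneg _) (hf₀_bdd _) 2)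
        _ = 2 * C ^ 2 := by ring
    rw [Measure.integral_compProd hFint, Measure.integral_compProd hGint]
    refine integral_congr_ae (Filter.Eventually.of_forall fun x => ?_)
    -- inner integral computation
    have hy_int : Integrable (fun y : ℝ => y) (κ x) := by
      refine Integrable.mono' (integrable_const C)
        measurable_id.aestronglyMeasurable ?_
      filter_upwards [hκ_supp x] with y hy
      exact abs_le.mpr ⟨hy.1, hy.2⟩
    have hG_inner : Integrable (fun y : ℝ => (y ^ 2 - f₀ x ^ 2) * rdag x) (κ x) := by
      refine Integrable.mono' (integrable_const (2 * C ^ 2 * Crdag))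
        (((measurable_id.pow_const 2).sub measurable_const).mul_const _).aestronglyMeasurable ?_
      filter_upwards [hκ_supp x] with y hy
      have hy' : |y| ≤ C := abs_le.mpr ⟨hy.1, hy.2⟩
      rw [Real.norm_eq_abs, abs_mul, abs_of_nonneg (hrdag_nonneg _)]
      refine mul_le_mul ?_ (hrdag_bdd _) (hrdag_nonneg _) (by positivity)
      calc |y ^ 2 - f₀ x ^ 2| ≤ |y ^ 2| + |f₀ x ^ 2| := abs_sub _ _
        _ ≤ C ^ 2 + C ^ 2 := by
            rw [abs_pow, abs_pow]
            exact add_le_add (pow_le_pow_left₀ (abs_nonneg _) hy' 2)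
              (pow_le_pow_left₀ (abs_nonneg _) (hf₀_bdd _) 2)
        _ = 2 * C ^ 2 := by ring
    have hlin_int : Integrable (fun y : ℝ => 2 * gb x * rdag x * (f₀ x - y)) (κ x) :=
      ((integrable_const (f₀ x)).sub hy_int).const_mul _
    have hsplit : ∀ y : ℝ, ((y - gb x) ^ 2 - (f₀ x - gb x) ^ 2) * rdag x
        = (y ^ 2 - f₀ x ^ 2) * rdag x + 2 * gb x * rdag x * (f₀ x - y) := by
      intro y; ring
    calc ∫ y, ((y - gb x) ^ 2 - (f₀ x - gb x) ^ 2) * rdag x ∂(κ x)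
        = ∫ y, ((y ^ 2 - f₀ x ^ 2) * rdag x + 2 * gb x * rdag x * (f₀ x - y)) ∂(κ x) := by
          simp_rw [hsplit]
      _ = (∫ y, (y ^ 2 - f₀ x ^ 2) * rdag x ∂(κ x))
            + ∫ y, 2 * gb x * rdag x * (f₀ x - y) ∂(κ x) :=
          integral_add hG_inner hlin_int
      _ = ∫ y, (y ^ 2 - f₀ x ^ 2) * rdag x ∂(κ x) := by
          have : ∫ y, 2 * gb x * rdag x * (f₀ x - y) ∂(κ x)
              = 2 * gb x * rdag x * ∫ y, (f₀ x - y) ∂(κ x) := integral_const_mul _ _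
          rw [this, integral_sub (integrable_const _) hy_int, ← hf₀ x]
          simp
  constructor
  · intro h β
    have := h β
    rw [key β, key βstar] at this
    exact le_of_add_le_add_left this
  · intro h β
    rw [key β, key βstar]
    exact add_le_add_right (h β) _
end

section
/- Double robustness, case (ii) (correct density ratio, arbitrary regression function): for every bounded measurable f† : 𝒳 → ℝ and every bounded measurable g : 𝒳 → ℝ, the population DR risk with r† = r₀ equals the test-data population risk: R̈(g; f†, r₀) = ∫_{𝒳×ℝ} (y − g(x))² dQ(x,y). -/
open MeasureTheory ProbabilityTheory

/-- Double robustness, case (ii) (correct density ratio, arbitrary regression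
function): for every bounded measurable `f†` and bounded measurable `g`, the
population DR risk with `r† = r₀` equals the test-data population risk:
`R̈(g; f†, r₀) = ∫ (y − g x)² dQ`. -/
theorem dr_risk_correct_density_ratio
    {𝒳 : Type*} [MeasurableSpace 𝒳]
    (p : Measure 𝒳) [IsProbabilityMeasure p]
    (r₀ : 𝒳 → ℝ) (hr₀_meas : Measurable r₀) (hr₀_nonneg : ∀ x, 0 ≤ r₀ x)
    (Cr : ℝ) (hr₀_bdd : ∀ x, r₀ x ≤ Cr)
    (hr₀_int : ∫ x, r₀ x ∂p = 1)
    (κ : Kernel 𝒳 ℝ) [IsMarkovKernel κ]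
    (C : ℝ) (hC : 0 < C) (hκ_supp : ∀ x, ∀ᵐ y ∂(κ x), y ∈ Set.Icc (-C) C)
    (f₀ : 𝒳 → ℝ) (hf₀ : ∀ x, f₀ x = ∫ y, y ∂(κ x))
    (fdag : 𝒳 → ℝ) (hfdag_meas : Measurable fdag)
    (Cfdag : ℝ) (hfdag_bdd : ∀ x, |fdag x| ≤ Cfdag)
    (g : 𝒳 → ℝ) (hg_meas : Measurable g)
    (Cg : ℝ) (hg_bdd : ∀ x, |g x| ≤ Cg) :
    (∫ z : 𝒳 × ℝ, ((z.2 - g z.1) ^ 2 - (fdag z.1 - g z.1) ^ 2) * r₀ z.1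
          ∂(p.compProd κ)
        + ∫ x, (fdag x - g x) ^ 2 ∂(p.withDensity (fun x => ENNReal.ofReal (r₀ x))))
      = ∫ z : 𝒳 × ℝ, (z.2 - g z.1) ^ 2
          ∂((p.withDensity (fun x => ENNReal.ofReal (r₀ x))).compProd κ) := by
  set q : Measure 𝒳 := p.withDensity (fun x => ENNReal.ofReal (r₀ x)) with hq
  set Cr' : ℝ := max Cr 0 with hCr'
  have hr₀_bdd' : ∀ x, r₀ x ≤ Cr' := fun x => (hr₀_bdd x).trans (le_max_left _ _)
  have hCr0 : 0 ≤ Cr' := le_max_right _ _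
  -- q is a finite measure
  haveI hqfin : IsFiniteMeasure q := by
    refine isFiniteMeasure_withDensity (ne_of_lt ?_)
    calc ∫⁻ x, ENNReal.ofReal (r₀ x) ∂p ≤ ∫⁻ _, ENNReal.ofReal Cr' ∂p :=
          lintegral_mono fun x => ENNReal.ofReal_le_ofReal (hr₀_bdd' x)
      _ = ENNReal.ofReal Cr' := by simp
      _ < ⊤ := ENNReal.ofReal_lt_top
  -- translation of q-integrals into p-integrals
  have hq_int : ∀ (F : 𝒳 → ℝ), Measurable F →
      ∫ x, F x ∂q = ∫ x, r₀ x * F x ∂p := by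
    intro F hF
    have hfun : (fun x => ENNReal.ofReal (r₀ x))
        = fun x => ((Real.toNNReal (r₀ x) : NNReal) : ENNReal) := rfl
    rw [hq, hfun, integral_withDensity_eq_integral_smul hr₀_meas.real_toNNReal]
    refine integral_congr_ae (Filter.Eventually.of_forall fun x => ?_)
    simp [NNReal.smul_def, Real.coe_toNNReal _ (hr₀_nonneg x)]
  -- measurability
  have hφ_meas : Measurable fun z : 𝒳 × ℝ => (z.2 - g z.1) ^ 2 :=
    (measurable_snd.sub (hg_meas.comp measurable_fst)).pow_const 2
  have hψ_meas : Measurable fun x : 𝒳 => (fdag x - g x) ^ 2 :=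
    (hfdag_meas.sub hg_meas).pow_const 2
  have hr₁_meas : Measurable fun z : 𝒳 × ℝ => r₀ z.1 := hr₀_meas.comp measurable_fst
  -- a.e. bound on |y|
  have hae : ∀ (μ : Measure 𝒳) [SFinite μ], ∀ᵐ z : 𝒳 × ℝ ∂(μ.compProd κ), |z.2| ≤ C := by
    intro μ _
    have : ∀ᵐ z : 𝒳 × ℝ ∂(μ.compProd κ), z.2 ∈ Set.Icc (-C) C := by
      rw [Measure.ae_compProd_iff (measurable_snd measurableSet_Icc)]
      exact Filter.Eventually.of_forall fun x => hκ_supp x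
    filter_upwards [this] with z hz
    exact abs_le.2 ⟨hz.1, hz.2⟩
  have hbound : ∀ z : 𝒳 × ℝ, |z.2| ≤ C → |(z.2 - g z.1) ^ 2| ≤ (C + Cg) ^ 2 := by
    intro z hz
    have h1 : |z.2 - g z.1| ≤ C + Cg := (abs_sub _ _).trans (add_le_add hz (hg_bdd _))
    rw [abs_pow]
    exact pow_le_pow_left₀ (abs_nonneg _) h1 2
  -- integrabilities
  have hint_φr : Integrable (fun z : 𝒳 × ℝ => (z.2 - g z.1) ^ 2 * r₀ z.1) (p.compProd κ) := by
    refine (integrable_const ((C + Cg) ^ 2 * Cr')).mono'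
      ((hφ_meas.mul hr₁_meas).aestronglyMeasurable) ?_
    filter_upwards [hae p] with z hz
    rw [Real.norm_eq_abs, abs_mul, abs_of_nonneg (hr₀_nonneg _)]
    exact mul_le_mul (hbound z hz) (hr₀_bdd' _) (hr₀_nonneg _)
      (by positivity)
  have hint_ψr : Integrable (fun z : 𝒳 × ℝ => (fdag z.1 - g z.1) ^ 2 * r₀ z.1) (p.compProd κ) := by
    refine (integrable_const ((Cfdag + Cg) ^ 2 * Cr')).mono'
      (((hψ_meas.comp measurable_fst).mul hr₁_meas).aestronglyMeasurable) ?_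
    refine Filter.Eventually.of_forall fun z => ?_
    rw [Real.norm_eq_abs, abs_mul, abs_of_nonneg (hr₀_nonneg _)]
    refine mul_le_mul ?_ (hr₀_bdd' _) (hr₀_nonneg _) (by positivity)
    rw [abs_pow]
    exact pow_le_pow_left₀ (abs_nonneg _)
      ((abs_sub _ _).trans (add_le_add (hfdag_bdd _) (hg_bdd _))) 2
  have hint_φq : Integrable (fun z : 𝒳 × ℝ => (z.2 - g z.1) ^ 2) (q.compProd κ) := by
    refine (integrable_const ((C + Cg) ^ 2)).mono' hφ_meas.aestronglyMeasurable ?_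
    filter_upwards [hae q] with z hz using hbound z hz
  -- Step A: the weighted ψ-integral over the product reduces to the base
  have hStepA : ∫ z : 𝒳 × ℝ, (fdag z.1 - g z.1) ^ 2 * r₀ z.1 ∂(p.compProd κ)
      = ∫ x, (fdag x - g x) ^ 2 * r₀ x ∂p := by
    rw [Measure.integral_compProd hint_ψr]
    refine integral_congr_ae (Filter.Eventually.of_forall fun x => ?_)
    haveI : IsProbabilityMeasure (κ x) := IsMarkovKernel.isProbabilityMeasure x
    simp
  -- Step B: RHS as weighted P-integral
  have hStepB : ∫ z : 𝒳 × ℝ, (z.2 - g z.1) ^ 2 ∂(q.compProd κ)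
      = ∫ z : 𝒳 × ℝ, (z.2 - g z.1) ^ 2 * r₀ z.1 ∂(p.compProd κ) := by
    rw [Measure.integral_compProd hint_φq, Measure.integral_compProd hint_φr]
    have hmeasI : Measurable fun x => ∫ y, (y - g x) ^ 2 ∂(κ x) := by
      have := MeasureTheory.StronglyMeasurable.integral_kernel_prod_right
        (κ := κ) (f := fun x y => (y - g x) ^ 2) hφ_meas.stronglyMeasurable
      exact this.measurable
    rw [hq_int _ hmeasI]
    refine integral_congr_ae (Filter.Eventually.of_forall fun x => ?_)
    show r₀ x * ∫ y, (y - g x) ^ 2 ∂(κ x) = ∫ y, (y - g x) ^ 2 * r₀ x ∂(κ x)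
    rw [mul_comm]
    exact (integral_mul_const _ _).symm
  -- Step C: split the first integral
  have hsplit : ∫ z : 𝒳 × ℝ, ((z.2 - g z.1) ^ 2 - (fdag z.1 - g z.1) ^ 2) * r₀ z.1
        ∂(p.compProd κ)
      = ∫ z : 𝒳 × ℝ, (z.2 - g z.1) ^ 2 * r₀ z.1 ∂(p.compProd κ)
        - ∫ z : 𝒳 × ℝ, (fdag z.1 - g z.1) ^ 2 * r₀ z.1 ∂(p.compProd κ) := by
    rw [← integral_sub hint_φr hint_ψr]
    refine integral_congr_ae (Filter.Eventually.of_forall fun z => ?_)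
    ring
  -- the q-integral of ψ
  have hψq : ∫ x, (fdag x - g x) ^ 2 ∂q
      = ∫ z : 𝒳 × ℝ, (fdag z.1 - g z.1) ^ 2 * r₀ z.1 ∂(p.compProd κ) := by
    rw [hq_int _ hψ_meas, hStepA]
    refine integral_congr_ae (Filter.Eventually.of_forall fun x => ?_)
    ring
  rw [hsplit, hψq, hStepB]
  ring
end

section
/- Double robustness of the DR population risk: let Θ be a set, (g_β)_{β∈Θ} a family of bounded measurable functions 𝒳 → ℝ, f† : 𝒳 → ℝ bounded measurable, and r† : 𝒳 → ℝ nonnegative bounded measurable. If either f†(x) = f₀(x) for p-almost every x, or r†(x) = r₀(x) for p-almost every x, then for every β* ∈ Θ: β* minimizes β ↦ R̈(g_β; f†, r†) over Θ if and only if β* minimizes the test risk β ↦ ∫_{𝒳×ℝ} (y − g_β(x))² dQ(x,y) over Θ. -/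
open MeasureTheory ProbabilityTheory
open scoped ENNReal NNReal

/-- Double robustness of the DR population risk: if either `f† = f₀` `p`-a.e. or
`r† = r₀` `p`-a.e., then `β*` minimizes the DR risk `β ↦ R̈(g β; f†, r†)` over `Θ`
iff `β*` minimizes the test risk `β ↦ ∫ (y − g β x)² dQ` over `Θ`. -/
theorem double_robustness_dr_risk_minimizer
    {𝒳 : Type*} [MeasurableSpace 𝒳]
    (p : Measure 𝒳) [IsProbabilityMeasure p]
    (r₀ : 𝒳 → ℝ) (hr₀_meas : Measurable r₀) (hr₀_nonneg : ∀ x, 0 ≤ r₀ x)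
    (Cr : ℝ) (hr₀_bdd : ∀ x, r₀ x ≤ Cr)
    (hr₀_int : ∫ x, r₀ x ∂p = 1)
    (κ : Kernel 𝒳 ℝ) [IsMarkovKernel κ]
    (C : ℝ) (hC : 0 < C) (hκ_supp : ∀ x, ∀ᵐ y ∂(κ x), y ∈ Set.Icc (-C) C)
    (f₀ : 𝒳 → ℝ) (hf₀ : ∀ x, f₀ x = ∫ y, y ∂(κ x))
    (fdag : 𝒳 → ℝ) (hfdag_meas : Measurable fdag)
    (Cfdag : ℝ) (hfdag_bdd : ∀ x, |fdag x| ≤ Cfdag)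
    (rdag : 𝒳 → ℝ) (hrdag_meas : Measurable rdag) (hrdag_nonneg : ∀ x, 0 ≤ rdag x)
    (Crdag : ℝ) (hrdag_bdd : ∀ x, rdag x ≤ Crdag)
    {Θ : Type*} (g : Θ → 𝒳 → ℝ) (hg_meas : ∀ β, Measurable (g β))
    (hg_bdd : ∀ β, ∃ Cg, ∀ x, |g β x| ≤ Cg)
    (hdr : (∀ᵐ x ∂p, fdag x = f₀ x) ∨ (∀ᵐ x ∂p, rdag x = r₀ x))
    (βstar : Θ) :
    (∀ β : Θ,
        (∫ z : 𝒳 × ℝ, ((z.2 - g βstar z.1) ^ 2 - (fdag z.1 - g βstar z.1) ^ 2) * rdag z.1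
              ∂(p.compProd κ)
            + ∫ x, (fdag x - g βstar x) ^ 2
              ∂(p.withDensity (fun x => ENNReal.ofReal (r₀ x))))
          ≤ (∫ z : 𝒳 × ℝ, ((z.2 - g β z.1) ^ 2 - (fdag z.1 - g β z.1) ^ 2) * rdag z.1
              ∂(p.compProd κ)
            + ∫ x, (fdag x - g β x) ^ 2
              ∂(p.withDensity (fun x => ENNReal.ofReal (r₀ x)))))
      ↔ (∀ β : Θ,
        ∫ z : 𝒳 × ℝ, (z.2 - g βstar z.1) ^ 2
            ∂((p.withDensity (fun x => ENNReal.ofReal (r₀ x))).compProd κ)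
          ≤ ∫ z : 𝒳 × ℝ, (z.2 - g β z.1) ^ 2
            ∂((p.withDensity (fun x => ENNReal.ofReal (r₀ x))).compProd κ)) := by
  set q : Measure 𝒳 := p.withDensity (fun x => ENNReal.ofReal (r₀ x)) with hq
  -- q is a finite measure
  haveI hqfin : IsFiniteMeasure q := by
    refine isFiniteMeasure_withDensity ?_
    refine ne_of_lt (lt_of_le_of_lt
      (lintegral_mono fun x => ENNReal.ofReal_le_ofReal (hr₀_bdd x)) ?_)
    simp [lintegral_const]
  -- integration against q
  have hq_int : ∀ (h : 𝒳 → ℝ), ∫ x, h x ∂q = ∫ x, r₀ x * h x ∂p := by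
    intro h
    rw [hq, show (fun x => ENNReal.ofReal (r₀ x))
        = (fun x => ((fun x => (r₀ x).toNNReal) x : ℝ≥0∞)) from rfl,
      integral_withDensity_eq_integral_smul (hr₀_meas.real_toNNReal)]
    refine integral_congr_ae (Filter.Eventually.of_forall fun x => ?_)
    simp [NNReal.smul_def, Real.coe_toNNReal _ (hr₀_nonneg x)]
  -- a.e. bound on y
  have hY : ∀ x, ∀ᵐ y ∂(κ x), |y| ≤ C :=
    fun x => (hκ_supp x).mono fun y hy => abs_le.mpr ⟨hy.1, hy.2⟩
  -- integrability wrt κ x of bounded measurable functions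
  have hκ_int : ∀ (x : 𝒳) (h : ℝ → ℝ), Measurable h → ∀ K : ℝ,
      (∀ y : ℝ, |y| ≤ C → |h y| ≤ K) → Integrable h (κ x) := by
    intro x h hm K hb
    refine (integrable_const K).mono' hm.aestronglyMeasurable ?_
    exact (hY x).mono fun y hy => by simpa [Real.norm_eq_abs] using hb y hy
  have hκ_y : ∀ x, Integrable (fun y => y) (κ x) :=
    fun x => hκ_int x _ measurable_id C (fun y hy => hy)
  have hκ_y2 : ∀ x, Integrable (fun y => y ^ 2) (κ x) := by
    refine fun x => hκ_int x _ (measurable_id.pow_const 2) (C ^ 2) (fun y hy => ?_)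
    rw [abs_pow]
    exact pow_le_pow_left₀ (abs_nonneg y) hy 2
  -- second moment
  set m2 : 𝒳 → ℝ := fun x => ∫ y, y ^ 2 ∂(κ x) with hm2
  -- measurability of f₀ and m2
  have hf₀_meas : Measurable f₀ := by
    have h1 : StronglyMeasurable fun x => ∫ y, (fun (_ : 𝒳) (y : ℝ) => y) x y ∂(κ x) :=
      StronglyMeasurable.integral_kernel_prod_right
        (measurable_snd (α := 𝒳) (β := ℝ)).stronglyMeasurable
    have : f₀ = fun x => ∫ y, y ∂(κ x) := funext hf₀
    rw [this]; exact h1.measurable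
  have hm2_meas : Measurable m2 := by
    have h1 : StronglyMeasurable fun x => ∫ y, (fun (_ : 𝒳) (y : ℝ) => y ^ 2) x y ∂(κ x) :=
      StronglyMeasurable.integral_kernel_prod_right
        ((measurable_snd (α := 𝒳) (β := ℝ)).pow_const 2).stronglyMeasurable
    exact h1.measurable
  -- bounds on f₀ and m2
  have hf₀_bdd : ∀ x, |f₀ x| ≤ C := by
    intro x
    rw [hf₀]
    have := norm_integral_le_of_norm_le (μ := κ x) (f := fun y : ℝ => y)
      (integrable_const C) ((hY x).mono fun y hy => by simpa [Real.norm_eq_abs] using hy)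
    simpa [Real.norm_eq_abs] using this
  have hm2_bdd : ∀ x, |m2 x| ≤ C ^ 2 := by
    intro x
    have := norm_integral_le_of_norm_le (μ := κ x) (f := fun y : ℝ => y ^ 2)
      (integrable_const (C ^ 2)) ((hY x).mono fun y hy => by
        rw [Real.norm_eq_abs, abs_pow]
        exact pow_le_pow_left₀ (abs_nonneg y) hy 2)
    simpa [Real.norm_eq_abs] using this
  -- conditional second moment of (y - c)²
  have hsq : ∀ (x : 𝒳) (c : ℝ),
      ∫ y, (y - c) ^ 2 ∂(κ x) = m2 x - 2 * c * f₀ x + c ^ 2 := by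
    intro x c
    have hrw : (fun y : ℝ => (y - c) ^ 2) = fun y => y ^ 2 - (2 * c) * y + c ^ 2 := by
      funext y; ring
    have hI1 : Integrable (fun y : ℝ => y ^ 2 - 2 * c * y) (κ x) :=
      (hκ_y2 x).sub ((hκ_y x).const_mul (2 * c))
    rw [hrw, integral_add hI1 (integrable_const _),
      integral_sub (hκ_y2 x) ((hκ_y x).const_mul (2 * c)), integral_const_mul, integral_const]
    simp [hf₀ x, hm2]
  -- integrability wrt p of bounded measurable functions
  have hp_int : ∀ (h : 𝒳 → ℝ), Measurable h → ∀ K : ℝ,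
      (∀ x, |h x| ≤ K) → Integrable h p := by
    intro h hm K hb
    exact (integrable_const K).mono' hm.aestronglyMeasurable
      (Filter.Eventually.of_forall fun x => by simpa [Real.norm_eq_abs] using hb x)
  have habs_mul : ∀ {a b Ka Kb : ℝ}, |a| ≤ Ka → |b| ≤ Kb → |a * b| ≤ Ka * Kb := by
    intro a b Ka Kb h1 h2
    rw [abs_mul]
    exact mul_le_mul h1 h2 (abs_nonneg _) ((abs_nonneg a).trans h1)
  -- integrability wrt compProd measures of bounded measurable functions
  have hcomp_int : ∀ (μ : Measure 𝒳) (_ : IsFiniteMeasure μ) (h : 𝒳 × ℝ → ℝ),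
      Measurable h → ∀ K : ℝ, (∀ x y, |y| ≤ C → |h (x, y)| ≤ K) →
      Integrable h (μ.compProd κ) := by
    intro μ hμ h hm K hb
    have hae : ∀ᵐ z ∂(μ.compProd κ), |z.2| ≤ C := by
      refine Measure.ae_compProd_of_ae_ae
        (measurableSet_le (measurable_snd.abs) measurable_const) ?_
      exact Filter.Eventually.of_forall fun x => hY x
    refine (integrable_const K).mono' hm.aestronglyMeasurable ?_
    exact hae.mono fun z hz => by simpa [Real.norm_eq_abs] using hb z.1 z.2 hz
  -- the constant difference
  set c : ℝ := ∫ x, (rdag x - r₀ x) * (m2 x - (f₀ x) ^ 2) ∂p with hc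
  -- key identity: DR risk = test risk + c
  have key : ∀ β : Θ,
      (∫ z : 𝒳 × ℝ, ((z.2 - g β z.1) ^ 2 - (fdag z.1 - g β z.1) ^ 2) * rdag z.1
          ∂(p.compProd κ) + ∫ x, (fdag x - g β x) ^ 2 ∂q)
        = (∫ z : 𝒳 × ℝ, (z.2 - g β z.1) ^ 2 ∂(q.compProd κ)) + c := by
    intro β
    obtain ⟨Cg, hCg⟩ := hg_bdd β
    have hCg0 : ∀ x : 𝒳, 0 ≤ Cg := fun x => (abs_nonneg _).trans (hCg x)
    -- abbreviations
    set A : 𝒳 → ℝ := fun x => m2 x - 2 * g β x * f₀ x + (g β x) ^ 2 with hA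
    set B : 𝒳 → ℝ := fun x => (fdag x - g β x) ^ 2 with hB
    have hA_meas : Measurable A :=
      (hm2_meas.sub ((((hg_meas β).const_mul 2).mul hf₀_meas))).add ((hg_meas β).pow_const 2)
    have hB_meas : Measurable B := (hfdag_meas.sub (hg_meas β)).pow_const 2
    have hA_bdd : ∀ x, |A x| ≤ C ^ 2 + 2 * Cg * C + Cg ^ 2 := by
      intro x
      have h1 := abs_le.mp (hCg x)
      have h2 := abs_le.mp (hf₀_bdd x)
      have h3 := abs_le.mp (hm2_bdd x)
      rw [abs_le]
      simp only [hA]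
      constructor <;> nlinarith
    have hB_bdd : ∀ x, |B x| ≤ (Cfdag + Cg) ^ 2 := by
      intro x
      have h1 := abs_le.mp (hCg x)
      have h2 := abs_le.mp (hfdag_bdd x)
      rw [abs_le]
      simp only [hB]
      constructor <;> nlinarith
    -- step 1 : DR first term
    have e1 : ∫ z : 𝒳 × ℝ, ((z.2 - g β z.1) ^ 2 - (fdag z.1 - g β z.1) ^ 2) * rdag z.1
        ∂(p.compProd κ) = ∫ x, rdag x * (A x - B x) ∂p := by
      have hint : Integrable
          (fun z : 𝒳 × ℝ => ((z.2 - g β z.1) ^ 2 - (fdag z.1 - g β z.1) ^ 2) * rdag z.1)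
          (p.compProd κ) := by
        refine hcomp_int p inferInstance _ ?_ (((C + Cg) ^ 2 + (Cfdag + Cg) ^ 2) * Crdag) ?_
        · exact (((measurable_snd.sub ((hg_meas β).comp measurable_fst)).pow_const 2).sub
            (((hfdag_meas.comp measurable_fst).sub ((hg_meas β).comp measurable_fst)).pow_const
              2)).mul (hrdag_meas.comp measurable_fst)
        · intro x y hy
          have h1 := abs_le.mp (hCg x)
          have h2 := abs_le.mp (hfdag_bdd x)
          have h3 := abs_le.mp hy
          have h5 : |(y - g β x) ^ 2 - (fdag x - g β x) ^ 2| ≤ (C + Cg) ^ 2 + (Cfdag + Cg) ^ 2 := by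
            rw [abs_le]
            constructor <;> nlinarith [sq_nonneg (y - g β x), sq_nonneg (fdag x - g β x)]
          have h6 : |rdag x| ≤ Crdag := by
            rw [abs_of_nonneg (hrdag_nonneg x)]; exact hrdag_bdd x
          exact habs_mul h5 h6
      rw [Measure.integral_compProd hint]
      refine integral_congr_ae (Filter.Eventually.of_forall fun x => ?_)
      show ∫ y, ((y - g β x) ^ 2 - (fdag x - g β x) ^ 2) * rdag x ∂(κ x)
          = rdag x * (A x - B x)
      rw [integral_mul_const]
      have : ∫ y, ((y - g β x) ^ 2 - (fdag x - g β x) ^ 2) ∂(κ x)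
          = A x - B x := by
        have hI2 : Integrable (fun y : ℝ => y ^ 2 - 2 * g β x * y + g β x ^ 2) (κ x) :=
          ((hκ_y2 x).sub ((hκ_y x).const_mul (2 * g β x))).add (integrable_const _)
        have hint2 : Integrable (fun y : ℝ => (y - g β x) ^ 2) (κ x) :=
          hI2.congr (Filter.Eventually.of_forall fun y => by ring)
        rw [integral_sub hint2 (integrable_const _), integral_const, hsq x (g β x)]
        simp [hA, hB]
      rw [this, mul_comm]
    -- step 2 : DR second term
    have e2 : ∫ x, (fdag x - g β x) ^ 2 ∂q = ∫ x, r₀ x * B x ∂p := hq_int B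
    -- step 3 : test risk
    have e3 : ∫ z : 𝒳 × ℝ, (z.2 - g β z.1) ^ 2 ∂(q.compProd κ) = ∫ x, r₀ x * A x ∂p := by
      have hint : Integrable (fun z : 𝒳 × ℝ => (z.2 - g β z.1) ^ 2) (q.compProd κ) := by
        refine hcomp_int q inferInstance _
          ((measurable_snd.sub ((hg_meas β).comp measurable_fst)).pow_const 2)
          ((C + Cg) ^ 2) ?_
        intro x y hy
        have h1 := abs_le.mp (hCg x)
        have h3 := abs_le.mp hy
        rw [abs_le]
        constructor <;> nlinarith
      rw [Measure.integral_compProd hint]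
      refine Eq.trans (integral_congr_ae (Filter.Eventually.of_forall fun x => ?_)) (hq_int A)
      show ∫ y, (y - g β x) ^ 2 ∂(κ x) = A x
      rw [hsq x (g β x)]
    rw [e1, e2, e3, hc]
    -- now combine the integrals over p
    have i1 : Integrable (fun x => rdag x * (A x - B x)) p := by
      refine hp_int _ (hrdag_meas.mul (hA_meas.sub hB_meas))
        (Crdag * ((C ^ 2 + 2 * Cg * C + Cg ^ 2) + (Cfdag + Cg) ^ 2)) (fun x => ?_)
      refine habs_mul (by rw [abs_of_nonneg (hrdag_nonneg x)]; exact hrdag_bdd x) ?_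
      exact (abs_sub (A x) (B x)).trans (add_le_add (hA_bdd x) (hB_bdd x))
    have i2 : Integrable (fun x => r₀ x * B x) p := by
      refine hp_int _ (hr₀_meas.mul hB_meas) (Cr * (Cfdag + Cg) ^ 2) (fun x => ?_)
      exact habs_mul (by rw [abs_of_nonneg (hr₀_nonneg x)]; exact hr₀_bdd x) (hB_bdd x)
    have i3 : Integrable (fun x => r₀ x * A x) p := by
      refine hp_int _ (hr₀_meas.mul hA_meas) (Cr * (C ^ 2 + 2 * Cg * C + Cg ^ 2)) (fun x => ?_)
      exact habs_mul (by rw [abs_of_nonneg (hr₀_nonneg x)]; exact hr₀_bdd x) (hA_bdd x)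
    have i4 : Integrable (fun x => (rdag x - r₀ x) * (m2 x - (f₀ x) ^ 2)) p := by
      refine hp_int _ ((hrdag_meas.sub hr₀_meas).mul (hm2_meas.sub (hf₀_meas.pow_const 2)))
        ((Crdag + Cr) * (C ^ 2 + C ^ 2)) (fun x => ?_)
      refine habs_mul ?_ ?_
      · refine (abs_sub _ _).trans (add_le_add ?_ ?_)
        · rw [abs_of_nonneg (hrdag_nonneg x)]; exact hrdag_bdd x
        · rw [abs_of_nonneg (hr₀_nonneg x)]; exact hr₀_bdd x
      · refine (abs_sub _ _).trans (add_le_add (hm2_bdd x) ?_)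
        rw [abs_pow, sq_abs] ; nlinarith [abs_le.mp (hf₀_bdd x)]
    rw [← integral_add i1 i2, ← integral_add i3 i4]
    refine integral_congr_ae ?_
    rcases hdr with hcase | hcase
    · filter_upwards [hcase] with x hx
      simp only [hA, hB, hx]
      ring
    · filter_upwards [hcase] with x hx
      simp only [hA, hB, hx]
      ring
  constructor
  · intro h β
    have h1 := h β
    rw [key β, key βstar] at h1
    linarith
  · intro h β
    have h1 := h β
    rw [key β, key βstar]
    linarith
end

section
/- Neyman-orthogonality (product-bias) identity for the DR score: for all bounded measurable h, f̂ : 𝒳 → ℝ and every nonnegative bounded measurable r̂ : 𝒳 → ℝ, ∫_{𝒳×ℝ} h(x)(y − f̂(x)) r̂(x) dP(x,y) + ∫_𝒳 h(x)(f̂(x) − f₀(x)) dq(x) − ∫_{𝒳×ℝ} h(x)(y − f₀(x)) r₀(x) dP(x,y) = ∫_𝒳 h(x) (f₀(x) − f̂(x)) (r̂(x) − r₀(x)) dp(x). -/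
open MeasureTheory ProbabilityTheory


lemma compProd_int_eq
    {𝒳 : Type*} [MeasurableSpace 𝒳]
    (p : Measure 𝒳) [IsProbabilityMeasure p]
    (κ : Kernel 𝒳 ℝ) [IsMarkovKernel κ]
    (C : ℝ) (hC : 0 < C) (hκ_supp : ∀ x, ∀ᵐ y ∂(κ x), y ∈ Set.Icc (-C) C)
    (f₀ : 𝒳 → ℝ) (hf₀ : ∀ x, f₀ x = ∫ y, y ∂(κ x))
    (g : 𝒳 → ℝ) (hg : Measurable g) (Cg : ℝ) (hgb : ∀ x, |g x| ≤ Cg)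
    (c : 𝒳 → ℝ) (hc : Measurable c) (Cc : ℝ) (hcb : ∀ x, |c x| ≤ Cc) :
    (∫ z : 𝒳 × ℝ, g z.1 * (z.2 - c z.1) ∂(p.compProd κ))
      = ∫ x, g x * (f₀ x - c x) ∂p := by
  have hyint : ∀ x, Integrable (fun y : ℝ => y) (κ x) := by
    intro x
    refine Integrable.mono' (integrable_const C) measurable_id.aestronglyMeasurable ?_
    filter_upwards [hκ_supp x] with y hy
    exact abs_le.2 ⟨hy.1, hy.2⟩
  have haey : ∀ᵐ z : 𝒳 × ℝ ∂(p.compProd κ), z.2 ∈ Set.Icc (-C) C := by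
    rw [Measure.ae_compProd_iff (measurable_snd measurableSet_Icc)]
    exact ae_of_all _ fun x => hκ_supp x
  have hint : Integrable (fun z : 𝒳 × ℝ => g z.1 * (z.2 - c z.1)) (p.compProd κ) := by
    refine Integrable.mono' (integrable_const (Cg * (C + Cc)))
      ((hg.comp measurable_fst).mul
        (measurable_snd.sub (hc.comp measurable_fst))).aestronglyMeasurable ?_
    filter_upwards [haey] with z hz
    rw [Real.norm_eq_abs, abs_mul]
    have h1 : |z.2 - c z.1| ≤ C + Cc := by
      have := abs_le.2 ⟨hz.1, hz.2⟩
      calc |z.2 - c z.1| ≤ |z.2| + |c z.1| := abs_sub _ _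
        _ ≤ C + Cc := add_le_add this (hcb _)
    have h0 : (0:ℝ) ≤ Cg := le_trans (abs_nonneg _) (hgb z.1)
    exact mul_le_mul (hgb _) h1 (abs_nonneg _) h0
  rw [Measure.integral_compProd hint]
  refine integral_congr_ae (ae_of_all _ fun x => ?_)
  simp only
  rw [show (∫ y, g x * (y - c x) ∂(κ x)) = g x * ∫ y, (y - c x) ∂(κ x) from
    integral_const_mul _ _, integral_sub (hyint x) (integrable_const _), integral_const]
  simp [hf₀ x]


/-- Neyman-orthogonality (product-bias) identity for the DR score: the bias of the
DR score at nuisance estimates `(f̂, r̂)` equals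
`∫ h (f₀ − f̂)(r̂ − r₀) dp`. -/
theorem dr_score_product_bias_identity
    {𝒳 : Type*} [MeasurableSpace 𝒳]
    (p : Measure 𝒳) [IsProbabilityMeasure p]
    (r₀ : 𝒳 → ℝ) (hr₀_meas : Measurable r₀) (hr₀_nonneg : ∀ x, 0 ≤ r₀ x)
    (Cr : ℝ) (hr₀_bdd : ∀ x, r₀ x ≤ Cr)
    (hr₀_int : ∫ x, r₀ x ∂p = 1)
    (κ : Kernel 𝒳 ℝ) [IsMarkovKernel κ]
    (C : ℝ) (hC : 0 < C) (hκ_supp : ∀ x, ∀ᵐ y ∂(κ x), y ∈ Set.Icc (-C) C)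
    (f₀ : 𝒳 → ℝ) (hf₀ : ∀ x, f₀ x = ∫ y, y ∂(κ x))
    (h : 𝒳 → ℝ) (hh_meas : Measurable h)
    (Ch : ℝ) (hh_bdd : ∀ x, |h x| ≤ Ch)
    (fhat : 𝒳 → ℝ) (hfhat_meas : Measurable fhat)
    (Cf : ℝ) (hfhat_bdd : ∀ x, |fhat x| ≤ Cf)
    (rhat : 𝒳 → ℝ) (hrhat_meas : Measurable rhat) (hrhat_nonneg : ∀ x, 0 ≤ rhat x)
    (Crhat : ℝ) (hrhat_bdd : ∀ x, rhat x ≤ Crhat) :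
    (∫ z : 𝒳 × ℝ, h z.1 * (z.2 - fhat z.1) * rhat z.1 ∂(p.compProd κ))
        + (∫ x, h x * (fhat x - f₀ x) ∂(p.withDensity (fun x => ENNReal.ofReal (r₀ x))))
        - (∫ z : 𝒳 × ℝ, h z.1 * (z.2 - f₀ z.1) * r₀ z.1 ∂(p.compProd κ))
      = ∫ x, h x * (f₀ x - fhat x) * (rhat x - r₀ x) ∂p := by
  -- measurability and boundedness of f₀
  have hf₀_meas : Measurable f₀ := by
    have h1 : StronglyMeasurable fun z : 𝒳 × ℝ => z.2 := measurable_snd.stronglyMeasurable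
    have h2 := MeasureTheory.StronglyMeasurable.integral_kernel_prod_right' (κ := κ) h1
    have e : f₀ = fun x => ∫ y, y ∂κ x := funext hf₀
    rw [e]
    exact h2.measurable
  have hf₀_bdd : ∀ x, |f₀ x| ≤ C := by
    intro x
    rw [hf₀ x, ← Real.norm_eq_abs]
    have hb : ∀ᵐ y ∂(κ x), ‖(y : ℝ)‖ ≤ C := by
      filter_upwards [hκ_supp x] with y hy
      rw [Real.norm_eq_abs]; exact abs_le.2 ⟨hy.1, hy.2⟩
    calc ‖∫ y, (y : ℝ) ∂κ x‖ ≤ ∫ _, C ∂κ x :=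
          norm_integral_le_of_norm_le (integrable_const C) hb
      _ = C := by simp
  -- bounds for products
  have hhr : ∀ x, |h x * rhat x| ≤ Ch * Crhat := fun x => by
    rw [abs_mul, abs_of_nonneg (hrhat_nonneg x)]
    exact mul_le_mul (hh_bdd x) (hrhat_bdd x) (hrhat_nonneg x)
      (le_trans (abs_nonneg _) (hh_bdd x))
  have hhr₀ : ∀ x, |h x * r₀ x| ≤ Ch * Cr := fun x => by
    rw [abs_mul, abs_of_nonneg (hr₀_nonneg x)]
    exact mul_le_mul (hh_bdd x) (hr₀_bdd x) (hr₀_nonneg x)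
      (le_trans (abs_nonneg _) (hh_bdd x))
  -- first compProd integral
  have e1 : (∫ z : 𝒳 × ℝ, h z.1 * (z.2 - fhat z.1) * rhat z.1 ∂(p.compProd κ))
      = ∫ x, (h x * rhat x) * (f₀ x - fhat x) ∂p := by
    rw [show (fun z : 𝒳 × ℝ => h z.1 * (z.2 - fhat z.1) * rhat z.1)
        = fun z : 𝒳 × ℝ => (fun x => h x * rhat x) z.1 * (z.2 - fhat z.1) by
      funext z; ring]
    exact compProd_int_eq p κ C hC hκ_supp f₀ hf₀ _ (hh_meas.mul hrhat_meas) _ hhr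
      fhat hfhat_meas Cf hfhat_bdd
  -- third compProd integral
  have e3 : (∫ z : 𝒳 × ℝ, h z.1 * (z.2 - f₀ z.1) * r₀ z.1 ∂(p.compProd κ)) = 0 := by
    rw [show (fun z : 𝒳 × ℝ => h z.1 * (z.2 - f₀ z.1) * r₀ z.1)
        = fun z : 𝒳 × ℝ => (fun x => h x * r₀ x) z.1 * (z.2 - f₀ z.1) by
      funext z; ring]
    rw [compProd_int_eq p κ C hC hκ_supp f₀ hf₀ (fun x => h x * r₀ x) (hh_meas.mul hr₀_meas) _ hhr₀
      f₀ hf₀_meas C hf₀_bdd]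
    simp
  -- withDensity integral
  have e2 : (∫ x, h x * (fhat x - f₀ x) ∂(p.withDensity (fun x => ENNReal.ofReal (r₀ x))))
      = ∫ x, r₀ x * (h x * (fhat x - f₀ x)) ∂p := by
    have : (fun x => ENNReal.ofReal (r₀ x))
        = fun x => ((Real.toNNReal (r₀ x) : NNReal) : ENNReal) := rfl
    rw [this, integral_withDensity_eq_integral_smul hr₀_meas.real_toNNReal]
    refine integral_congr_ae (ae_of_all _ fun x => ?_)
    simp [NNReal.smul_def, Real.coe_toNNReal _ (hr₀_nonneg x)]
  rw [e1, e2, e3, sub_zero, ← integral_add]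
  · refine integral_congr_ae (ae_of_all _ fun x => ?_)
    ring
  · refine Integrable.mono' (integrable_const ((Ch * Crhat) * (C + Cf)))
      (((hh_meas.mul hrhat_meas).mul (hf₀_meas.sub hfhat_meas)).aestronglyMeasurable) ?_
    refine ae_of_all _ fun x => ?_
    rw [Real.norm_eq_abs, abs_mul]
    refine mul_le_mul (hhr x) ?_ (abs_nonneg _) (le_trans (abs_nonneg _) (hhr x))
    calc |f₀ x - fhat x| ≤ |f₀ x| + |fhat x| := abs_sub _ _
      _ ≤ C + Cf := add_le_add (hf₀_bdd x) (hfhat_bdd x)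
  · refine Integrable.mono' (integrable_const (Cr * (Ch * (Cf + C))))
      ((hr₀_meas.mul (hh_meas.mul (hfhat_meas.sub hf₀_meas))).aestronglyMeasurable) ?_
    refine ae_of_all _ fun x => ?_
    rw [Real.norm_eq_abs, abs_mul, abs_mul]
    have h1 : |fhat x - f₀ x| ≤ Cf + C := by
      calc |fhat x - f₀ x| ≤ |fhat x| + |f₀ x| := abs_sub _ _
        _ ≤ Cf + C := add_le_add (hfhat_bdd x) (hf₀_bdd x)
    rw [abs_of_nonneg (hr₀_nonneg x)]
    have hCh : (0:ℝ) ≤ Ch := le_trans (abs_nonneg _) (hh_bdd x)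
    refine mul_le_mul (hr₀_bdd x) ?_ (mul_nonneg (abs_nonneg _) (abs_nonneg _))
      (le_trans (hr₀_nonneg x) (hr₀_bdd x))
    exact mul_le_mul (hh_bdd x) h1 (abs_nonneg _) hCh
end

section
/- Product bound on the DR score bias: for all bounded measurable h, f̂ : 𝒳 → ℝ and every nonnegative bounded measurable r̂ : 𝒳 → ℝ, | ∫_{𝒳×ℝ} h(x)(y − f̂(x)) r̂(x) dP(x,y) + ∫_𝒳 h(x)(f̂(x) − f₀(x)) dq(x) − ∫_{𝒳×ℝ} h(x)(y − f₀(x)) r₀(x) dP(x,y) | ≤ (sup_{x∈𝒳} |h(x)|) · ‖f₀ − f̂‖_{L²(p)} · ‖r̂ − r₀‖_{L²(p)}, where ‖u‖_{L²(p)} := (∫_𝒳 u(x)² dp(x))^{1/2}. -/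
open MeasureTheory ProbabilityTheory

/-- Product bound on the DR score bias: the bias of the DR score at nuisance
estimates `(f̂, r̂)` is bounded by `(sup |h|) ⬝ ‖f₀ − f̂‖_{L²(p)} ⬝ ‖r̂ − r₀‖_{L²(p)}`. -/
theorem dr_score_product_bias_bound
    {𝒳 : Type*} [MeasurableSpace 𝒳]
    (p : Measure 𝒳) [IsProbabilityMeasure p]
    (r₀ : 𝒳 → ℝ) (hr₀_meas : Measurable r₀) (hr₀_nonneg : ∀ x, 0 ≤ r₀ x)
    (Cr : ℝ) (hr₀_bdd : ∀ x, r₀ x ≤ Cr)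
    (hr₀_int : ∫ x, r₀ x ∂p = 1)
    (κ : Kernel 𝒳 ℝ) [IsMarkovKernel κ]
    (C : ℝ) (hC : 0 < C) (hκ_supp : ∀ x, ∀ᵐ y ∂(κ x), y ∈ Set.Icc (-C) C)
    (f₀ : 𝒳 → ℝ) (hf₀ : ∀ x, f₀ x = ∫ y, y ∂(κ x))
    (h : 𝒳 → ℝ) (hh_meas : Measurable h)
    (Ch : ℝ) (hh_bdd : ∀ x, |h x| ≤ Ch)
    (fhat : 𝒳 → ℝ) (hfhat_meas : Measurable fhat)
    (Cf : ℝ) (hfhat_bdd : ∀ x, |fhat x| ≤ Cf)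
    (rhat : 𝒳 → ℝ) (hrhat_meas : Measurable rhat) (hrhat_nonneg : ∀ x, 0 ≤ rhat x)
    (Crhat : ℝ) (hrhat_bdd : ∀ x, rhat x ≤ Crhat) :
    |(∫ z : 𝒳 × ℝ, h z.1 * (z.2 - fhat z.1) * rhat z.1 ∂(p.compProd κ))
        + (∫ x, h x * (fhat x - f₀ x) ∂(p.withDensity (fun x => ENNReal.ofReal (r₀ x))))
        - (∫ z : 𝒳 × ℝ, h z.1 * (z.2 - f₀ z.1) * r₀ z.1 ∂(p.compProd κ))|
      ≤ (⨆ x, |h x|) * Real.sqrt (∫ x, (f₀ x - fhat x) ^ 2 ∂p)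
          * Real.sqrt (∫ x, (rhat x - r₀ x) ^ 2 ∂p) := by
  -- integrability of bounded measurable functions on a probability measure
  have key : ∀ (u : 𝒳 → ℝ), Measurable u → ∀ B : ℝ, (∀ x, |u x| ≤ B) → Integrable u p := by
    intro u hu B hB
    refine Integrable.mono' (integrable_const B) hu.aestronglyMeasurable
      (Filter.Eventually.of_forall fun x => ?_)
    simpa [Real.norm_eq_abs] using hB x
  -- y is integrable against each κ x
  have hy_int : ∀ x, Integrable (fun y : ℝ => y) (κ x) := by
    intro x
    refine Integrable.mono' (integrable_const C) measurable_id.aestronglyMeasurable ?_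
    filter_upwards [hκ_supp x] with y hy
    rw [Real.norm_eq_abs, abs_le]
    exact ⟨hy.1, hy.2⟩
  -- measurability and bound for f₀
  have hf₀_meas : Measurable f₀ := by
    have : StronglyMeasurable fun x => ∫ y, (fun z : 𝒳 × ℝ => z.2) (x, y) ∂κ x :=
      (measurable_snd (α := 𝒳) (β := ℝ)).stronglyMeasurable.integral_kernel_prod_right'
    have := this.measurable
    simpa [← hf₀] using this
  have hf₀_bdd : ∀ x, |f₀ x| ≤ C := by
    intro x
    rw [hf₀ x, ← Real.norm_eq_abs]
    calc ‖∫ y, y ∂κ x‖ ≤ ∫ y, ‖y‖ ∂κ x := norm_integral_le_integral_norm _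
      _ ≤ ∫ _y, C ∂κ x := by
          refine integral_mono_ae ((hy_int x).norm) (integrable_const C) ?_
          filter_upwards [hκ_supp x] with y hy
          rw [Real.norm_eq_abs, abs_le]; exact ⟨hy.1, hy.2⟩
      _ = C := by simp
  -- a.e. bound on the compProd
  have hae : ∀ᵐ z : 𝒳 × ℝ ∂(p.compProd κ), z.2 ∈ Set.Icc (-C) C := by
    refine Measure.ae_compProd_of_ae_ae ?_ ?_
    · exact measurable_snd (measurableSet_Icc)
    · exact Filter.Eventually.of_forall fun x => hκ_supp x
  -- joint integrability helper
  have hjoint : ∀ (g r : 𝒳 → ℝ), Measurable g → Measurable r → ∀ Bg Br : ℝ,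
      (∀ x, |g x| ≤ Bg) → (∀ x, |r x| ≤ Br) →
      Integrable (fun z : 𝒳 × ℝ => h z.1 * (z.2 - g z.1) * r z.1) (p.compProd κ) := by
    intro g r hg hr Bg Br hBg hBr
    refine Integrable.mono' (integrable_const (Ch * (C + Bg) * Br))
      ((((hh_meas.comp measurable_fst).mul
        (measurable_snd.sub (hg.comp measurable_fst))).mul
        (hr.comp measurable_fst)).aestronglyMeasurable) ?_
    filter_upwards [hae] with z hz
    have h1 : |h z.1| ≤ Ch := hh_bdd z.1
    have h2 : |z.2 - g z.1| ≤ C + Bg := by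
      calc |z.2 - g z.1| ≤ |z.2| + |g z.1| := abs_sub _ _
        _ ≤ C + Bg := add_le_add (abs_le.2 ⟨hz.1, hz.2⟩) (hBg z.1)
    have h3 : |r z.1| ≤ Br := hBr z.1
    rw [Real.norm_eq_abs, abs_mul, abs_mul]
    have h0 : (0:ℝ) ≤ Ch := le_trans (abs_nonneg _) h1
    have h0' : (0:ℝ) ≤ C + Bg := le_trans (abs_nonneg _) h2
    exact mul_le_mul (mul_le_mul h1 h2 (abs_nonneg _) h0) h3 (abs_nonneg _)
      (mul_nonneg h0 h0')
  -- inner kernel integral computation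
  have hinner : ∀ (g r : 𝒳 → ℝ) (x : 𝒳),
      ∫ y, h x * (y - g x) * r x ∂κ x = h x * (f₀ x - g x) * r x := by
    intro g r x
    have : (fun y : ℝ => h x * (y - g x) * r x) = fun y => (h x * r x) * (y - g x) := by
      funext y; ring
    rw [this, integral_const_mul, integral_sub (hy_int x) (integrable_const _),
      integral_const]
    simp [← hf₀ x]
    ring
  -- first compProd integral
  have hrhat_abs : ∀ x, |rhat x| ≤ Crhat := fun x => by
    rw [abs_of_nonneg (hrhat_nonneg x)]; exact hrhat_bdd x
  have hr₀_abs : ∀ x, |r₀ x| ≤ Cr := fun x => by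
    rw [abs_of_nonneg (hr₀_nonneg x)]; exact hr₀_bdd x
  have hA : (∫ z : 𝒳 × ℝ, h z.1 * (z.2 - fhat z.1) * rhat z.1 ∂(p.compProd κ))
      = ∫ x, h x * (f₀ x - fhat x) * rhat x ∂p := by
    rw [Measure.integral_compProd (hjoint fhat rhat hfhat_meas hrhat_meas Cf Crhat
      hfhat_bdd hrhat_abs)]
    exact integral_congr_ae (Filter.Eventually.of_forall fun x =>
      hinner fhat rhat x)
  have hB : (∫ z : 𝒳 × ℝ, h z.1 * (z.2 - f₀ z.1) * r₀ z.1 ∂(p.compProd κ))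
      = ∫ x, h x * (f₀ x - f₀ x) * r₀ x ∂p := by
    rw [Measure.integral_compProd (hjoint f₀ r₀ hf₀_meas hr₀_meas C Cr hf₀_bdd hr₀_abs)]
    exact integral_congr_ae (Filter.Eventually.of_forall fun x =>
      hinner f₀ r₀ x)
  have hB0 : (∫ z : 𝒳 × ℝ, h z.1 * (z.2 - f₀ z.1) * r₀ z.1 ∂(p.compProd κ)) = 0 := by
    rw [hB]; simp
  -- withDensity integral
  have hC' : (∫ x, h x * (fhat x - f₀ x) ∂(p.withDensity (fun x => ENNReal.ofReal (r₀ x))))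
      = ∫ x, r₀ x * (h x * (fhat x - f₀ x)) ∂p := by
    have hd : (fun x => ENNReal.ofReal (r₀ x)) = fun x => ((r₀ x).toNNReal : ENNReal) := by
      funext x; simp [ENNReal.ofReal]
    rw [hd, integral_withDensity_eq_integral_smul hr₀_meas.real_toNNReal]
    refine integral_congr_ae (Filter.Eventually.of_forall fun x => ?_)
    simp [NNReal.smul_def, Real.coe_toNNReal _ (hr₀_nonneg x)]
  -- combine into a single integral
  have hfdiff_bdd : ∀ x, |f₀ x - fhat x| ≤ C + Cf := fun x =>
    (abs_sub _ _).trans (add_le_add (hf₀_bdd x) (hfhat_bdd x))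
  have hrdiff_bdd : ∀ x, |rhat x - r₀ x| ≤ Crhat + Cr := fun x =>
    (abs_sub _ _).trans (add_le_add (hrhat_abs x) (hr₀_abs x))
  have hint1 : Integrable (fun x => h x * (f₀ x - fhat x) * rhat x) p := by
    refine key _ ((hh_meas.mul (hf₀_meas.sub hfhat_meas)).mul hrhat_meas)
      (Ch * (C + Cf) * Crhat) fun x => ?_
    rw [abs_mul, abs_mul]
    exact mul_le_mul (mul_le_mul (hh_bdd x) (hfdiff_bdd x) (abs_nonneg _)
      (le_trans (abs_nonneg _) (hh_bdd x))) (hrhat_abs x) (abs_nonneg _)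
      (mul_nonneg (le_trans (abs_nonneg _) (hh_bdd x)) (le_trans (abs_nonneg _) (hfdiff_bdd x)))
  have hint2 : Integrable (fun x => r₀ x * (h x * (fhat x - f₀ x))) p := by
    refine key _ (hr₀_meas.mul (hh_meas.mul (hfhat_meas.sub hf₀_meas)))
      (Cr * (Ch * (Cf + C))) fun x => ?_
    rw [abs_mul, abs_mul]
    have hx : |fhat x - f₀ x| ≤ Cf + C := (abs_sub _ _).trans
      (add_le_add (hfhat_bdd x) (hf₀_bdd x))
    exact mul_le_mul (hr₀_abs x) (mul_le_mul (hh_bdd x) hx (abs_nonneg _)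
      (le_trans (abs_nonneg _) (hh_bdd x))) (mul_nonneg (abs_nonneg _) (abs_nonneg _))
      (le_trans (abs_nonneg _) (hr₀_abs x))
  have hsum : (∫ x, h x * (f₀ x - fhat x) * rhat x ∂p)
      + (∫ x, r₀ x * (h x * (fhat x - f₀ x)) ∂p)
      = ∫ x, h x * (f₀ x - fhat x) * (rhat x - r₀ x) ∂p := by
    rw [← integral_add hint1 hint2]
    refine integral_congr_ae (Filter.Eventually.of_forall fun x => ?_)
    ring
  rw [hA, hC', hB0, sub_zero, hsum]
  -- Cauchy–Schwarz step
  set S := ⨆ x, |h x| with hS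
  have hbdd : BddAbove (Set.range fun x => |h x|) := ⟨Ch, by rintro _ ⟨x, rfl⟩; exact hh_bdd x⟩
  by_cases hne : Nonempty 𝒳
  · have hhS : ∀ x, |h x| ≤ S := fun x => le_ciSup hbdd x
    have hS0 : 0 ≤ S := le_trans (abs_nonneg _) (hhS (Classical.arbitrary 𝒳))
    have habs : |∫ x, h x * (f₀ x - fhat x) * (rhat x - r₀ x) ∂p|
        ≤ ∫ x, S * (|f₀ x - fhat x| * |rhat x - r₀ x|) ∂p := by
      rw [← Real.norm_eq_abs]
      refine (norm_integral_le_integral_norm _).trans ?_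
      simp only [Real.norm_eq_abs]
      refine integral_mono_ae ?_ ?_ ?_
      · refine (key _ ((hh_meas.mul (hf₀_meas.sub hfhat_meas)).mul
          (hrhat_meas.sub hr₀_meas)) (Ch * (C + Cf) * (Crhat + Cr)) fun x => ?_).abs
        simp only [Pi.mul_apply, Pi.sub_apply]
        rw [abs_mul, abs_mul]
        exact mul_le_mul (mul_le_mul (hh_bdd x) (hfdiff_bdd x) (abs_nonneg _)
          (le_trans (abs_nonneg _) (hh_bdd x))) (hrdiff_bdd x) (abs_nonneg _)
          (mul_nonneg (le_trans (abs_nonneg _) (hh_bdd x))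
            (le_trans (abs_nonneg _) (hfdiff_bdd x)))
      · refine (key _ (((hf₀_meas.sub hfhat_meas).abs.mul
          ((hrhat_meas.sub hr₀_meas).abs)) ) ((C + Cf) * (Crhat + Cr)) fun x => ?_).const_mul S
        simp only [Pi.mul_apply, Pi.sub_apply]
        rw [abs_mul, abs_abs, abs_abs]
        exact mul_le_mul (hfdiff_bdd x) (hrdiff_bdd x) (abs_nonneg _)
          (le_trans (abs_nonneg _) (hfdiff_bdd x))
      · refine Filter.Eventually.of_forall fun x => ?_
        simp only [abs_mul, ← mul_assoc]
        exact mul_le_mul_of_nonneg_right (mul_le_mul_of_nonneg_right (hhS x) (abs_nonneg _))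
          (abs_nonneg _)
    rw [integral_const_mul] at habs
    refine habs.trans ?_
    rw [mul_assoc]
    refine mul_le_mul_of_nonneg_left ?_ hS0
    -- Hölder with p = q = 2
    have hconj : Real.HolderConjugate 2 2 := by constructor <;> norm_num
    have hmemf : MemLp (fun x => |f₀ x - fhat x|) (ENNReal.ofReal 2) p := by
      refine MemLp.mono_exponent (memLp_top_of_bound
        ((hf₀_meas.sub hfhat_meas).abs.aestronglyMeasurable) (C + Cf)
        (Filter.Eventually.of_forall fun x => by
          simpa [Real.norm_eq_abs, abs_abs] using hfdiff_bdd x)) le_top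
    have hmemr : MemLp (fun x => |rhat x - r₀ x|) (ENNReal.ofReal 2) p := by
      refine MemLp.mono_exponent (memLp_top_of_bound
        ((hrhat_meas.sub hr₀_meas).abs.aestronglyMeasurable) (Crhat + Cr)
        (Filter.Eventually.of_forall fun x => by
          simpa [Real.norm_eq_abs, abs_abs] using hrdiff_bdd x)) le_top
    have hCS := integral_mul_le_Lp_mul_Lq_of_nonneg hconj
      (Filter.Eventually.of_forall fun x => abs_nonneg (f₀ x - fhat x))
      (Filter.Eventually.of_forall fun x => abs_nonneg (rhat x - r₀ x)) hmemf hmemr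
    have e1 : (∫ x, |f₀ x - fhat x| ^ (2:ℝ) ∂p) = ∫ x, (f₀ x - fhat x) ^ 2 ∂p := by
      refine integral_congr_ae (Filter.Eventually.of_forall fun x => ?_)
      simp only [Real.rpow_two, sq_abs]
    have e2 : (∫ x, |rhat x - r₀ x| ^ (2:ℝ) ∂p) = ∫ x, (rhat x - r₀ x) ^ 2 ∂p := by
      refine integral_congr_ae (Filter.Eventually.of_forall fun x => ?_)
      simp only [Real.rpow_two, sq_abs]
    rw [e1, e2] at hCS
    refine hCS.trans ?_
    rw [Real.sqrt_eq_rpow, Real.sqrt_eq_rpow]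
  · have hempty : IsEmpty 𝒳 := not_nonempty_iff.mp hne
    rw [integral_of_isEmpty] at hr₀_int
    exact absurd hr₀_int zero_ne_one
end
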